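/- Fix l > 0 and n ≥ 1. For λ = (λ₁,…,λ_n) with λ₁ > ⋯ > λ_n > 0 and w = (w₁,…,w_n) with w_j > 0 and Σ_{j=1}^n w_j < 1, set λ₀ = 0 and w₀ = 1 − Σ_{j=1}^n w_j, and define complex numbers κ₀,…,κ_{2n+1} as the coefficients of Σ_{j=0}^{2n+1} κ_j z^j = z·∏_{j=1}^n (z² − λ_j²) − i·l·Σ_{j=0}^n w_j ∏_{0≤k≤n, k≠j} (z² − λ_k²). (This polynomial equals det(zI − 𝒥 − i·l·I_{1×1}) when (λ_j, w_j) are the spectral data of the corresponding (2n+1)×(2n+1) zero-diagonal Jacobi matrix 𝒥.) Then the odd-index coefficients κ_{2j+1} are real and the even-index coefficients κ_{2j} are purely imaginary, and |det ∂(Im κ₀, Re κ₁, …, Im κ_{2n−2}, Re κ_{2n−1})/∂(λ₁,…,λ_n,w₁,…,w_n)| = 2^n l^n ∏_{j=1}^n λ_j³ · ∏_{1≤j<k≤n} |λ_j² − λ_k²|². -/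

import Mathlib

open MeasureTheory Matrix Polynomial Finset

/-- The polynomial `z·∏ (z² - λ_j²) - i·l·Σ_{j=0}^n w_j ∏_{k≠j} (z² - λ_k²)` (with
`λ₀ = 0`), which is `det(zI - 𝒥 - i·l·I₁ₓ₁)` when `(λ_j, w_j)` are the spectral data of
the corresponding `(2n+1) × (2n+1)` zero-diagonal Jacobi matrix `𝒥`. -/
noncomputable def kappaPolyOC (n : ℕ) (l : ℝ) (lam : Fin n → ℝ) (w : Fin n → ℝ) (w₀ : ℝ) :
    Polynomial ℂ :=
  X * ∏ j : Fin n, (X ^ 2 - C ((lam j : ℂ) ^ 2)) -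
    C (Complex.I * (l : ℂ)) * (C ((w₀ : ℂ)) * ∏ j : Fin n, (X ^ 2 - C ((lam j : ℂ) ^ 2)) +
      ∑ j : Fin n, C ((w j : ℂ)) * X ^ 2 *
        ∏ k ∈ Finset.univ.erase j, (X ^ 2 - C ((lam k : ℂ) ^ 2)))

/-- `kappaPolyOC` as a function of a single vector `x ∈ ℝ^(2n)` of variables
`(λ₁,…,λ_n, w₁,…,w_n)`, with `w₀ := 1 - Σ_j w_j`. -/
noncomputable def kappaMapOC (n : ℕ) (l : ℝ) (x : Fin (2 * n) → ℝ) : Polynomial ℂ :=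
  kappaPolyOC n l
    (fun j : Fin n => x ⟨(j : ℕ), by have := j.isLt; omega⟩)
    (fun j : Fin n => x ⟨n + (j : ℕ), by have := j.isLt; omega⟩)
    (1 - ∑ k : Fin n, x ⟨n + (k : ℕ), by have := k.isLt; omega⟩)

/-- The real vector `(Im κ₀, Re κ₁, Im κ₂, …)`: component `i` is `Im κ_i` for even `i`
and `Re κ_i` for odd `i`. -/
noncomputable def kappaReImO (n : ℕ) (l : ℝ) (x : Fin (2 * n) → ℝ) (i : Fin (2 * n)) : ℝ :=
  if (i : ℕ) % 2 = 0 then ((kappaMapOC n l x).coeff (i : ℕ)).im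
  else ((kappaMapOC n l x).coeff (i : ℕ)).re

/-! ### Auxiliary real polynomials -/

/-- `Q(y) = ∏_j (y - λ_j²)`. -/
noncomputable def QpOC (n : ℕ) (lam : Fin n → ℝ) : Polynomial ℝ :=
  ∏ j : Fin n, (X - C (lam j ^ 2))

/-- `P_m(y) = ∏_{k ≠ m} (y - λ_k²)`. -/
noncomputable def PpOC (n : ℕ) (lam : Fin n → ℝ) (m : Fin n) : Polynomial ℝ :=
  ∏ k ∈ Finset.univ.erase m, (X - C (lam k ^ 2))

/-- `R(y) = w₀ Q(y) + Σ_j w_j y P_j(y)`. -/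
noncomputable def RpOC (n : ℕ) (lam w : Fin n → ℝ) (w₀ : ℝ) : Polynomial ℝ :=
  C w₀ * QpOC n lam + ∑ j : Fin n, C (w j) * X * PpOC n lam j

/-- The coordinate projections. -/
noncomputable def lamOfOC (n : ℕ) (y : Fin (2 * n) → ℝ) : Fin n → ℝ :=
  fun j : Fin n => y ⟨(j : ℕ), by have := j.isLt; omega⟩

noncomputable def wOfOC (n : ℕ) (y : Fin (2 * n) → ℝ) : Fin n → ℝ :=
  fun j : Fin n => y ⟨n + (j : ℕ), by have := j.isLt; omega⟩

lemma kappaMapOC_eq (n : ℕ) (l : ℝ) (y : Fin (2 * n) → ℝ) :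
    kappaMapOC n l y = kappaPolyOC n l (lamOfOC n y) (wOfOC n y) (1 - ∑ k, wOfOC n y k) := rfl

lemma kappaPolyOC_eq (n : ℕ) (l : ℝ) (lam w : Fin n → ℝ) (w₀ : ℝ) :
    kappaPolyOC n l lam w w₀ =
      X * (Polynomial.expand ℂ 2 ((QpOC n lam).map (algebraMap ℝ ℂ))) -
        C (Complex.I * l) *
          (Polynomial.expand ℂ 2 ((RpOC n lam w w₀).map (algebraMap ℝ ℂ))) := by
  simp only [kappaPolyOC, QpOC, RpOC, PpOC, Polynomial.map_add, Polynomial.map_mul,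
    Polynomial.map_sub, Polynomial.map_prod, Polynomial.map_sum, Polynomial.map_X,
    Polynomial.map_C, _root_.map_add, _root_.map_mul, _root_.map_sub, _root_.map_prod,
    _root_.map_sum, Polynomial.expand_X, Polynomial.expand_C, Complex.coe_algebraMap,
    Complex.ofReal_pow]

lemma kappaPolyOC_coeff_odd (n : ℕ) (l : ℝ) (lam w : Fin n → ℝ) (w₀ : ℝ) (j : ℕ) :
    (kappaPolyOC n l lam w w₀).coeff (2 * j + 1) = ((QpOC n lam).coeff j : ℂ) := by
  have h1 : ¬ (2 ∣ 2 * j + 1) := by omega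
  simp [kappaPolyOC_eq, coeff_X_mul, Polynomial.coeff_expand (by norm_num : 0 < 2), h1,
    mul_assoc, coeff_C_mul, Nat.mul_div_cancel_left, coeff_map, Complex.coe_algebraMap]

lemma kappaPolyOC_coeff_even (n : ℕ) (l : ℝ) (lam w : Fin n → ℝ) (w₀ : ℝ) (j : ℕ) :
    (kappaPolyOC n l lam w w₀).coeff (2 * j) =
      -(Complex.I * l) * ((RpOC n lam w w₀).coeff j : ℂ) := by
  rcases j with _ | j
  · simp [kappaPolyOC_eq, mul_coeff_zero, Polynomial.coeff_expand (by norm_num : 0 < 2),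
      mul_assoc, coeff_C_mul, coeff_map, Complex.coe_algebraMap]
  · have h2 : 2 * (j + 1) = (2 * j + 1) + 1 := by ring
    have h1 : ¬ (2 ∣ 2 * j + 1) := by omega
    have h5 : 2 ∣ 2 * j + 1 + 1 := by omega
    have h6 : (2 * j + 1 + 1) / 2 = j + 1 := by omega
    rw [kappaPolyOC_eq, h2]
    simp [coeff_X_mul, Polynomial.coeff_expand (by norm_num : 0 < 2), h1, h5, h6, mul_assoc,
      coeff_C_mul, coeff_map, Complex.coe_algebraMap]

lemma kappaReImO_odd (n : ℕ) (l : ℝ) (y : Fin (2 * n) → ℝ) (i : Fin (2 * n)) (j : ℕ)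
    (hij : (i : ℕ) = 2 * j + 1) :
    kappaReImO n l y i = (QpOC n (lamOfOC n y)).coeff j := by
  rw [kappaReImO, hij, if_neg (by omega), kappaMapOC_eq, kappaPolyOC_coeff_odd]
  exact Complex.ofReal_re _

lemma kappaReImO_even (n : ℕ) (l : ℝ) (y : Fin (2 * n) → ℝ) (i : Fin (2 * n)) (j : ℕ)
    (hij : (i : ℕ) = 2 * j) :
    kappaReImO n l y i =
      -(l * (RpOC n (lamOfOC n y) (wOfOC n y) (1 - ∑ k, wOfOC n y k)).coeff j) := by
  rw [kappaReImO, hij, if_pos (by omega), kappaMapOC_eq, kappaPolyOC_coeff_even]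
  simp

/-! ### Structural lemmas about the polynomials -/

lemma QpOC_factor (n : ℕ) (lam : Fin n → ℝ) (m : Fin n) :
    QpOC n lam = (X - C (lam m ^ 2)) * PpOC n lam m := by
  rw [QpOC, PpOC, ← Finset.mul_prod_erase univ _ (mem_univ m)]

lemma QpOC_update (n : ℕ) (lam : Fin n → ℝ) (m : Fin n) (t : ℝ) :
    QpOC n (Function.update lam m t) = (X - C (t ^ 2)) * PpOC n lam m := by
  rw [QpOC, ← Finset.mul_prod_erase univ _ (mem_univ m), Function.update_self]
  congr 1
  rw [PpOC]
  refine Finset.prod_congr rfl fun k hk => ?_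
  rw [Function.update_of_ne (Finset.mem_erase.mp hk).1]

lemma RpOC_update (n : ℕ) (lam w : Fin n → ℝ) (w₀ : ℝ) (m : Fin n) (t : ℝ) :
    RpOC n lam (Function.update w m t) (w₀ + w m - t) =
      RpOC n lam w w₀ + C (t - w m) * (C (lam m ^ 2) * PpOC n lam m) := by
  have hQ := QpOC_factor n lam m
  have hsum : ∀ v : Fin n → ℝ, ∑ j : Fin n, C (v j) * X * PpOC n lam j
      = C (v m) * X * PpOC n lam m + ∑ j ∈ univ.erase m, C (v j) * X * PpOC n lam j := by
    intro v
    rw [← Finset.add_sum_erase univ _ (mem_univ m)]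
  have hsum2 : ∑ j ∈ univ.erase m, C (Function.update w m t j) * X * PpOC n lam j
      = ∑ j ∈ univ.erase m, C (w j) * X * PpOC n lam j := by
    refine Finset.sum_congr rfl fun k hk => ?_
    rw [Function.update_of_ne (Finset.mem_erase.mp hk).1]
  rw [RpOC, RpOC, hsum, hsum, hsum2, Function.update_self, hQ]
  rw [map_sub, map_add, map_sub]
  ring

lemma PpOC_natDegree_lt (n : ℕ) (lam : Fin n → ℝ) (m : Fin n) :
    (PpOC n lam m).natDegree < n := by
  have h : (PpOC n lam m).natDegree = (univ.erase m).card := by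
    rw [PpOC, Polynomial.natDegree_prod _ _ (fun k _ => X_sub_C_ne_zero _),
      Finset.sum_congr rfl fun k _ => natDegree_X_sub_C (lam k ^ 2)]
    simp
  rw [h, Finset.card_erase_of_mem (mem_univ m), Finset.card_univ, Fintype.card_fin]
  have : 0 < n := m.pos
  omega

/-! ### The determinant of the coefficient matrix -/

lemma detC_abs (n : ℕ) (lam : Fin n → ℝ) (hord : StrictAnti lam) (hpos : ∀ j, 0 < lam j) :
    |(Matrix.of fun m j : Fin n => (PpOC n lam m).coeff j).det| =
      ∏ i : Fin n, ∏ j ∈ Finset.Ioi i, |lam i ^ 2 - lam j ^ 2| := by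
  set μ : Fin n → ℝ := fun j => lam j ^ 2 with hμ
  have hμanti : StrictAnti μ := by
    intro a b hab
    have h1 := hord hab
    have := hpos a; have := hpos b
    simp only [hμ]
    nlinarith
  have hμinj : Function.Injective μ := hμanti.injective
  have hmul : (Matrix.of fun m j : Fin n => (PpOC n lam m).coeff j) * (Matrix.vandermonde μ)ᵀ
      = Matrix.diagonal (fun m => (PpOC n lam m).eval (μ m)) := by
    ext m t
    rw [Matrix.mul_apply]
    simp only [Matrix.of_apply, Matrix.transpose_apply, Matrix.vandermonde_apply]
    have heval : (PpOC n lam m).eval (μ t)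
        = ∑ j : Fin n, (PpOC n lam m).coeff j * μ t ^ (j : ℕ) := by
      rw [Polynomial.eval_eq_sum_range' (PpOC_natDegree_lt n lam m)]
      exact (Fin.sum_univ_eq_sum_range (fun i => (PpOC n lam m).coeff i * μ t ^ i) n).symm
    rw [← heval]
    rcases eq_or_ne m t with rfl | hmt
    · simp [Matrix.diagonal_apply_eq]
    · rw [Matrix.diagonal_apply_ne _ hmt]
      rw [PpOC, Polynomial.eval_prod]
      apply Finset.prod_eq_zero (Finset.mem_erase.mpr ⟨hmt.symm, mem_univ t⟩)
      simp [hμ]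
  have hdet := congrArg Matrix.det hmul
  rw [Matrix.det_mul, Matrix.det_transpose, Matrix.det_diagonal] at hdet
  have hV : (Matrix.vandermonde μ).det = ∏ i : Fin n, ∏ j ∈ Finset.Ioi i, (μ j - μ i) :=
    Matrix.det_vandermonde μ
  have hVne : (Matrix.vandermonde μ).det ≠ 0 := Matrix.det_vandermonde_ne_zero_iff.mpr hμinj
  have habs := congrArg abs hdet
  rw [abs_mul] at habs
  have hVabs : |(Matrix.vandermonde μ).det| = ∏ i : Fin n, ∏ j ∈ Finset.Ioi i, |μ i - μ j| := by
    rw [hV, Finset.abs_prod]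
    refine Finset.prod_congr rfl fun i _ => ?_
    rw [Finset.abs_prod]
    exact Finset.prod_congr rfl fun j _ => abs_sub_comm _ _
  have hdiag : |∏ m : Fin n, (PpOC n lam m).eval (μ m)|
      = (∏ i : Fin n, ∏ j ∈ Finset.Ioi i, |μ i - μ j|) ^ 2 := by
    have heval : ∀ m : Fin n, (PpOC n lam m).eval (μ m) = ∏ k ∈ univ.erase m, (μ m - μ k) := by
      intro m; rw [PpOC, Polynomial.eval_prod]; simp [hμ]
    have herase : ∀ m : Fin n, univ.erase m = Finset.Iio m ∪ Finset.Ioi m := by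
      intro m; ext k
      simp only [Finset.mem_erase, Finset.mem_univ, and_true, Finset.mem_union,
        Finset.mem_Iio, Finset.mem_Ioi]
      exact ne_iff_lt_or_gt
    have hdisj : ∀ m : Fin n, Disjoint (Finset.Iio m) (Finset.Ioi m) := by
      intro m
      rw [Finset.disjoint_left]
      intro a ha hb
      rw [Finset.mem_Iio] at ha
      rw [Finset.mem_Ioi] at hb
      exact absurd (ha.trans hb) (lt_irrefl _)
    calc |∏ m : Fin n, (PpOC n lam m).eval (μ m)|
        = ∏ m : Fin n, ∏ k ∈ univ.erase m, |μ m - μ k| := by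
          rw [Finset.abs_prod]
          refine Finset.prod_congr rfl fun m _ => ?_
          rw [heval m, Finset.abs_prod]
      _ = (∏ m : Fin n, ∏ k ∈ Finset.Iio m, |μ m - μ k|) *
            ∏ m : Fin n, ∏ k ∈ Finset.Ioi m, |μ m - μ k| := by
          rw [← Finset.prod_mul_distrib]
          refine Finset.prod_congr rfl fun m _ => ?_
          rw [herase m, Finset.prod_union (hdisj m)]
      _ = (∏ i : Fin n, ∏ j ∈ Finset.Ioi i, |μ i - μ j|) ^ 2 := by
          rw [sq]
          congr 1
          · rw [Finset.prod_comm' (t' := univ) (s' := fun k => Finset.Ioi k)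
              (by intro x y; simp)]
            exact Finset.prod_congr rfl fun i _ => Finset.prod_congr rfl fun j _ =>
              abs_sub_comm _ _
  rw [hVabs, hdiag] at habs
  have hVabsne : (∏ i : Fin n, ∏ j ∈ Finset.Ioi i, |μ i - μ j|) ≠ 0 := by
    rw [← hVabs]; simpa using hVne
  exact mul_right_cancel₀ hVabsne (habs.trans (pow_two _))

/-! ### Row and column reindexings -/

def rowEquivOC (n : ℕ) : (Fin n ⊕ Fin n) ≃ Fin (2 * n) where
  toFun := Sum.elim (fun j => ⟨2 * (j : ℕ) + 1, by have := j.isLt; omega⟩)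
    (fun j => ⟨2 * (j : ℕ), by have := j.isLt; omega⟩)
  invFun i := if (i : ℕ) % 2 = 0 then Sum.inr ⟨(i : ℕ) / 2, by have := i.isLt; omega⟩
    else Sum.inl ⟨(i : ℕ) / 2, by have := i.isLt; omega⟩
  left_inv := by
    rintro (j | j) <;> dsimp only [Sum.elim_inl, Sum.elim_inr] <;> split_ifs with h <;>
      first
        | rfl
        | omega
        | (congr 1; apply Fin.ext; simp only [Fin.val_mk]; try omega)
  right_inv := by
    intro i
    dsimp only
    split_ifs with h <;> dsimp only [Sum.elim_inl, Sum.elim_inr] <;>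
      (apply Fin.ext; simp only [Fin.val_mk]; try omega)

def colEquivOC (n : ℕ) : (Fin n ⊕ Fin n) ≃ Fin (2 * n) where
  toFun := Sum.elim (fun j => ⟨(j : ℕ), by have := j.isLt; omega⟩)
    (fun j => ⟨n + (j : ℕ), by have := j.isLt; omega⟩)
  invFun i := if h : (i : ℕ) < n then Sum.inl ⟨(i : ℕ), h⟩
    else Sum.inr ⟨(i : ℕ) - n, by have := i.isLt; omega⟩
  left_inv := by
    rintro (j | j) <;> dsimp only [Sum.elim_inl, Sum.elim_inr] <;> split_ifs with h <;>
      first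
        | rfl
        | omega
        | (congr 1; apply Fin.ext; simp only [Fin.val_mk]; try omega)
  right_inv := by
    intro i
    dsimp only
    split_ifs with h <;> dsimp only [Sum.elim_inl, Sum.elim_inr] <;>
      (apply Fin.ext; simp only [Fin.val_mk]; try omega)

lemma abs_det_submatrix_equiv (n : ℕ) (M : Matrix (Fin (2 * n)) (Fin (2 * n)) ℝ)
    (e f : (Fin n ⊕ Fin n) ≃ Fin (2 * n)) :
    |(M.submatrix e f).det| = |M.det| := by
  have h : M.submatrix e f = (M.submatrix f f).submatrix (e.trans f.symm : Equiv.Perm _) id := by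
    ext i j
    simp [Matrix.submatrix_apply]
  rw [h, Matrix.det_permute, abs_mul, Matrix.det_submatrix_equiv_self]
  rcases Int.units_eq_one_or (Equiv.Perm.sign (e.trans f.symm)) with hs | hs <;>
    rw [hs] <;> norm_num
/-- for `det(zI - 𝒥 - i·l·I₁ₓ₁)` in the odd case, the odd-index
coefficients are real and the even-index coefficients purely imaginary, and the Jacobian of
`(λ₁,…,λ_n, w₁,…,w_n) ↦ (Im κ₀, Re κ₁, …, Im κ_{2n-2}, Re κ_{2n-1})` has absolute value
`2^n l^n ∏ λ_j³ ∏_{j<k} |λ_j² - λ_k²|²`. -/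
theorem jacobian_nonhermitian_odd (n : ℕ) (hn : 1 ≤ n) (l : ℝ) (hl : 0 < l)
    (x : Fin (2 * n) → ℝ)
    (lam : Fin n → ℝ) (hlam : lam = fun j : Fin n => x ⟨(j : ℕ), by have := j.isLt; omega⟩)
    (hord : StrictAnti lam) (hpos : ∀ j, 0 < lam j)
    (hwpos : ∀ j : Fin n, 0 < x ⟨n + (j : ℕ), by have := j.isLt; omega⟩)
    (hwsum : ∑ j : Fin n, x ⟨n + (j : ℕ), by have := j.isLt; omega⟩ < 1) :
    (∀ j : ℕ, ((kappaMapOC n l x).coeff (2 * j + 1)).im = 0 ∧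
      ((kappaMapOC n l x).coeff (2 * j)).re = 0) ∧
    |(Matrix.of fun i j : Fin (2 * n) =>
        deriv (fun t => kappaReImO n l (Function.update x j t) i) (x j)).det| =
      2 ^ n * l ^ n * (∏ j, lam j ^ 3) *
        ∏ j : Fin n, ∏ k ∈ Finset.Ioi j, |lam j ^ 2 - lam k ^ 2| ^ 2 := by
  have hL : lamOfOC n x = lam := by rw [hlam]; rfl
  set wv : Fin n → ℝ := wOfOC n x with hwv
  set w₀ : ℝ := 1 - ∑ k, wOfOC n x k with hw₀
  constructor
  · intro j
    constructor
    · rw [kappaMapOC_eq, kappaPolyOC_coeff_odd]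
      exact Complex.ofReal_im _
    · rw [kappaMapOC_eq, kappaPolyOC_coeff_even]
      simp
  -- Part 2
  set M : Matrix (Fin (2 * n)) (Fin (2 * n)) ℝ := Matrix.of fun i j : Fin (2 * n) =>
      deriv (fun t => kappaReImO n l (Function.update x j t) i) (x j) with hM
  -- coordinate lemmas
  have hcol1lam : ∀ (m : Fin n) (t : ℝ),
      lamOfOC n (Function.update x (colEquivOC n (Sum.inl m)) t) = Function.update lam m t := by
    intro m t
    have hc : (colEquivOC n) (Sum.inl m)
        = (⟨(m : ℕ), by have := m.isLt; omega⟩ : Fin (2 * n)) := rfl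
    funext j
    show Function.update x (colEquivOC n (Sum.inl m)) t
      (⟨(j : ℕ), by have := j.isLt; omega⟩ : Fin (2 * n)) = _
    rw [hc, Function.update_apply, Function.update_apply, hlam]
    by_cases hjm : j = m
    · subst hjm
      rw [if_pos rfl, if_pos rfl]
    · rw [if_neg (fun hcc => hjm (Fin.ext (by simpa using congrArg Fin.val hcc))), if_neg hjm]
  have hcol1w : ∀ (m : Fin n) (t : ℝ),
      wOfOC n (Function.update x (colEquivOC n (Sum.inl m)) t) = wOfOC n x := by
    intro m t
    have hc : (colEquivOC n) (Sum.inl m)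
        = (⟨(m : ℕ), by have := m.isLt; omega⟩ : Fin (2 * n)) := rfl
    funext j
    show Function.update x (colEquivOC n (Sum.inl m)) t
      (⟨n + (j : ℕ), by have := j.isLt; omega⟩ : Fin (2 * n)) = _
    rw [hc]
    exact Function.update_of_ne (Fin.ne_of_val_ne (by simp; omega)) _ _
  have hcol2lam : ∀ (m : Fin n) (t : ℝ),
      lamOfOC n (Function.update x (colEquivOC n (Sum.inr m)) t) = lamOfOC n x := by
    intro m t
    have hc : (colEquivOC n) (Sum.inr m)
        = (⟨n + (m : ℕ), by have := m.isLt; omega⟩ : Fin (2 * n)) := rfl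
    funext j
    show Function.update x (colEquivOC n (Sum.inr m)) t
      (⟨(j : ℕ), by have := j.isLt; omega⟩ : Fin (2 * n)) = _
    rw [hc]
    exact Function.update_of_ne (Fin.ne_of_val_ne (by have := j.isLt; simp; omega)) _ _
  have hcol2w : ∀ (m : Fin n) (t : ℝ),
      wOfOC n (Function.update x (colEquivOC n (Sum.inr m)) t) = Function.update (wOfOC n x) m t := by
    intro m t
    have hc : (colEquivOC n) (Sum.inr m)
        = (⟨n + (m : ℕ), by have := m.isLt; omega⟩ : Fin (2 * n)) := rfl
    funext j
    show Function.update x (colEquivOC n (Sum.inr m)) t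
      (⟨n + (j : ℕ), by have := j.isLt; omega⟩ : Fin (2 * n)) = _
    rw [hc, Function.update_apply, Function.update_apply]
    by_cases hjm : j = m
    · subst hjm
      rw [if_pos rfl, if_pos rfl]
    · rw [if_neg (fun hcc => hjm (Fin.ext (by simpa using congrArg Fin.val hcc))), if_neg hjm]
      rfl
  have hxcol1 : ∀ m : Fin n, x (colEquivOC n (Sum.inl m)) = lam m := by
    intro m; rw [hlam]; rfl
  -- entries
  have hN11 : ∀ j m : Fin n, M (rowEquivOC n (Sum.inl j)) (colEquivOC n (Sum.inl m))
      = -(2 * lam m) * (PpOC n lam m).coeff (j : ℕ) := by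
    intro j m
    have hrow : ((rowEquivOC n (Sum.inl j) : Fin (2 * n)) : ℕ) = 2 * (j : ℕ) + 1 := rfl
    have hfun : (fun t => kappaReImO n l (Function.update x (colEquivOC n (Sum.inl m)) t)
          (rowEquivOC n (Sum.inl j)))
        = fun t : ℝ => (X * PpOC n lam m).coeff (j : ℕ) - t ^ 2 * (PpOC n lam m).coeff (j : ℕ) := by
      funext t
      rw [kappaReImO_odd n l _ _ (j : ℕ) hrow, hcol1lam m t, QpOC_update, sub_mul, coeff_sub,
        coeff_C_mul]
    rw [hM]
    simp only [Matrix.of_apply]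
    rw [hfun, hxcol1 m]
    have hd : HasDerivAt (fun t : ℝ => (X * PpOC n lam m).coeff (j : ℕ)
          - t ^ 2 * (PpOC n lam m).coeff (j : ℕ))
        (-(2 * lam m) * (PpOC n lam m).coeff (j : ℕ)) (lam m) := by
      have h1 := ((hasDerivAt_pow 2 (lam m)).mul_const
        ((PpOC n lam m).coeff (j : ℕ))).const_sub ((X * PpOC n lam m).coeff (j : ℕ))
      refine h1.congr_deriv ?_
      rw [pow_one]
      ring
    exact hd.deriv
  have hN12 : ∀ j m : Fin n, M (rowEquivOC n (Sum.inl j)) (colEquivOC n (Sum.inr m)) = 0 := by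
    intro j m
    have hrow : ((rowEquivOC n (Sum.inl j) : Fin (2 * n)) : ℕ) = 2 * (j : ℕ) + 1 := rfl
    have hfun : (fun t => kappaReImO n l (Function.update x (colEquivOC n (Sum.inr m)) t)
          (rowEquivOC n (Sum.inl j)))
        = fun _ : ℝ => (QpOC n (lamOfOC n x)).coeff (j : ℕ) := by
      funext t
      rw [kappaReImO_odd n l _ _ (j : ℕ) hrow, hcol2lam m t]
    rw [hM]
    simp only [Matrix.of_apply]
    rw [hfun]
    exact deriv_const _ _
  have hN22 : ∀ j m : Fin n, M (rowEquivOC n (Sum.inr j)) (colEquivOC n (Sum.inr m))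
      = -(l * lam m ^ 2) * (PpOC n lam m).coeff (j : ℕ) := by
    intro j m
    have hrow : ((rowEquivOC n (Sum.inr j) : Fin (2 * n)) : ℕ) = 2 * (j : ℕ) := rfl
    have hsum : ∀ t : ℝ, 1 - ∑ k, Function.update (wOfOC n x) m t k = w₀ + wOfOC n x m - t := by
      intro t
      rw [Finset.sum_update_of_mem (mem_univ m), ← Finset.erase_eq,
        Finset.sum_erase_eq_sub (mem_univ m), hw₀]
      ring
    have hfun : (fun t => kappaReImO n l (Function.update x (colEquivOC n (Sum.inr m)) t)
          (rowEquivOC n (Sum.inr j)))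
        = fun t : ℝ => -(l * ((RpOC n lam (wOfOC n x) w₀).coeff (j : ℕ)
            + (t - wOfOC n x m) * (lam m ^ 2 * (PpOC n lam m).coeff (j : ℕ)))) := by
      funext t
      rw [kappaReImO_even n l _ _ (j : ℕ) hrow, hcol2lam m t, hcol2w m t, hL, hsum t,
        RpOC_update, coeff_add, coeff_C_mul, coeff_C_mul]
    rw [hM]
    simp only [Matrix.of_apply]
    rw [hfun]
    have hd : HasDerivAt (fun t : ℝ => -(l * ((RpOC n lam (wOfOC n x) w₀).coeff (j : ℕ)
          + (t - wOfOC n x m) * (lam m ^ 2 * (PpOC n lam m).coeff (j : ℕ)))))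
        (-(l * lam m ^ 2) * (PpOC n lam m).coeff (j : ℕ)) (x (colEquivOC n (Sum.inr m))) := by
      have h1 := ((((hasDerivAt_id (x (colEquivOC n (Sum.inr m)))).sub_const
        (wOfOC n x m)).mul_const (lam m ^ 2 * (PpOC n lam m).coeff (j : ℕ))).const_add
        ((RpOC n lam (wOfOC n x) w₀).coeff (j : ℕ))).const_mul l |>.neg
      refine h1.congr_deriv ?_
      ring
    exact hd.deriv
  -- block decomposition
  set Cmat : Matrix (Fin n) (Fin n) ℝ := Matrix.of fun m j : Fin n => (PpOC n lam m).coeff (j : ℕ)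
    with hCmat
  set A : Matrix (Fin n) (Fin n) ℝ :=
    Matrix.of fun j m : Fin n => -(2 * lam m) * (PpOC n lam m).coeff (j : ℕ) with hA
  set D : Matrix (Fin n) (Fin n) ℝ :=
    Matrix.of fun j m : Fin n => -(l * lam m ^ 2) * (PpOC n lam m).coeff (j : ℕ) with hD
  set Cb : Matrix (Fin n) (Fin n) ℝ :=
    Matrix.of fun j m : Fin n => M (rowEquivOC n (Sum.inr j)) (colEquivOC n (Sum.inl m)) with hCb
  have hblock : M.submatrix (rowEquivOC n) (colEquivOC n) = Matrix.fromBlocks A 0 Cb D := by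
    apply Matrix.ext
    rintro (i | i) (j | j)
    · exact hN11 i j
    · exact hN12 i j
    · rfl
    · exact hN22 i j
  have habs : |M.det| = |A.det| * |D.det| := by
    rw [← abs_det_submatrix_equiv n M (rowEquivOC n) (colEquivOC n), hblock,
      Matrix.det_fromBlocks_zero₁₂, abs_mul]
  have hAdet : A.det = (∏ m : Fin n, -(2 * lam m)) * Cmat.det := by
    have h := Matrix.det_mul_row (fun m : Fin n => -(2 * lam m)) Cmatᵀ
    rw [Matrix.det_transpose] at h
    rw [← h]
    congr 1
  have hDdet : D.det = (∏ m : Fin n, -(l * lam m ^ 2)) * Cmat.det := by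
    have h := Matrix.det_mul_row (fun m : Fin n => -(l * lam m ^ 2)) Cmatᵀ
    rw [Matrix.det_transpose] at h
    rw [← h]
    congr 1
  have hCdet : |Cmat.det| = ∏ i : Fin n, ∏ j ∈ Finset.Ioi i, |lam i ^ 2 - lam j ^ 2| :=
    detC_abs n lam hord hpos
  have hAabs : |A.det| = (2 ^ n * ∏ m, lam m) * |Cmat.det| := by
    rw [hAdet, abs_mul, Finset.abs_prod]
    congr 1
    rw [Finset.prod_congr rfl fun m _ => by
      rw [abs_neg, abs_of_pos (by have := hpos m; linarith : (0:ℝ) < 2 * lam m)]]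
    rw [Finset.prod_mul_distrib, Finset.prod_const, Finset.card_univ, Fintype.card_fin]
  have hDabs : |D.det| = (l ^ n * ∏ m, lam m ^ 2) * |Cmat.det| := by
    rw [hDdet, abs_mul, Finset.abs_prod]
    congr 1
    rw [Finset.prod_congr rfl fun m _ => by
      rw [abs_neg, abs_of_pos (by have := hpos m; positivity : (0:ℝ) < l * lam m ^ 2)]]
    rw [Finset.prod_mul_distrib, Finset.prod_const, Finset.card_univ, Fintype.card_fin]
  rw [habs, hAabs, hDabs, hCdet]
  have hl3 : (∏ j, lam j ^ 3) = (∏ m, lam m) * ∏ m, lam m ^ 2 := by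
    rw [← Finset.prod_mul_distrib]
    exact Finset.prod_congr rfl fun m _ => by ring
  have hsq : (∏ j : Fin n, ∏ k ∈ Finset.Ioi j, |lam j ^ 2 - lam k ^ 2| ^ 2)
      = (∏ j : Fin n, ∏ k ∈ Finset.Ioi j, |lam j ^ 2 - lam k ^ 2|) ^ 2 := by
    calc (∏ j : Fin n, ∏ k ∈ Finset.Ioi j, |lam j ^ 2 - lam k ^ 2| ^ 2)
        = ∏ j : Fin n, (∏ k ∈ Finset.Ioi j, |lam j ^ 2 - lam k ^ 2|) ^ 2 :=
          Finset.prod_congr rfl fun j _ => Finset.prod_pow _ _ _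
      _ = (∏ j : Fin n, ∏ k ∈ Finset.Ioi j, |lam j ^ 2 - lam k ^ 2|) ^ 2 :=
          Finset.prod_pow _ _ _
  rw [hl3, hsq]
  ring
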